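/- arXiv:0801.2753 — 2 statements merged into one kernel-verified Lean document; each statement's English description precedes it below -/
import Mathlib

section
/- For every integer p ≥ 1 and every n ≥ 1, E(V_n^p) ≤ 2^p (n+1)^p E(N_n(0)^p). -/
open MeasureTheory ProbabilityTheory Filter Topology

section Aux

variable {Ω : Type*} [MeasureSpace Ω] [IsProbabilityMeasure (ℙ : Measure Ω)]

/-- Product formula for an injectively reindexed family of independent variables. -/
lemma stmt3_aux_prod (X : ℕ → Ω → ℤ)
    (hXindep : iIndepFun X ℙ)
    (m : ℕ) (τ : ℕ → ℕ) (hτ : Set.InjOn τ (Set.Iio m)) (a : Fin m → ℤ) :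
    ℙ (⋂ i : Fin m, X (τ i) ⁻¹' {a i}) = ∏ i : Fin m, ℙ (X (τ i) ⁻¹' {a i}) := by
  classical
  set A : ℕ → Set ℤ := fun j => ⋂ i : Fin m, ⋂ (_ : τ i = j), ({a i} : Set ℤ) with hA
  have hAτ : ∀ i : Fin m, A (τ i) = {a i} := by
    intro i
    ext x
    simp only [hA, Set.mem_iInter, Set.mem_singleton_iff]
    constructor
    · intro h; exact h i rfl
    · intro h i' hi'
      have : (i' : ℕ) = (i : ℕ) := hτ i'.isLt i.isLt hi'
      rw [show i' = i from Fin.ext this]; exact h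
  have hset : (⋂ i : Fin m, X (τ i) ⁻¹' {a i})
      = ⋂ j ∈ Finset.image (fun i : Fin m => τ i) Finset.univ, X j ⁻¹' A j := by
    ext ω
    simp only [Set.mem_iInter, Set.mem_preimage, Finset.mem_image, Finset.mem_univ, true_and,
      Set.mem_singleton_iff, hA]
    constructor
    · rintro h j ⟨i, rfl⟩ i' hi'
      have h' := h i'
      rw [hi'] at h'
      exact h'
    · intro h i
      exact h (τ i) ⟨i, rfl⟩ i rfl
  have hmeas : ∀ j ∈ Finset.image (fun i : Fin m => τ i) Finset.univ,
      MeasurableSet[(inferInstance : MeasurableSpace ℤ).comap (X j)] (X j ⁻¹' A j) :=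
    fun j _ => ⟨A j, trivial, rfl⟩
  rw [hset, hXindep.meas_biInter hmeas, Finset.prod_image ?_]
  · exact Finset.prod_congr rfl fun i _ => by rw [hAτ i]
  · intro i _ i' _ h
    exact Fin.ext (hτ i.isLt i'.isLt h)

/-- The reindexed tuple of increments has the same law as the original tuple. -/
lemma stmt3_aux_tuple (X : ℕ → Ω → ℤ) (hXmeas : ∀ k, Measurable (X k))
    (hXindep : iIndepFun X ℙ)
    (hXident : ∀ k, IdentDistrib (X k) (X 0) ℙ ℙ)
    (m : ℕ) (τ : ℕ → ℕ) (hτ : Set.InjOn τ (Set.Iio m)) :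
    IdentDistrib (fun ω (i : Fin m) => X (τ i) ω) (fun ω (i : Fin m) => X i ω) ℙ ℙ := by
  have h1 : Measurable (fun ω (i : Fin m) => X (τ i) ω) :=
    measurable_pi_lambda _ fun i => hXmeas _
  have h2 : Measurable (fun ω (i : Fin m) => X i ω) :=
    measurable_pi_lambda _ fun i => hXmeas _
  refine ⟨h1.aemeasurable, h2.aemeasurable, ?_⟩
  apply Measure.ext_of_singleton
  intro a
  rw [Measure.map_apply h1 (measurableSet_singleton a),
    Measure.map_apply h2 (measurableSet_singleton a)]
  have hpre1 : (fun ω (i : Fin m) => X (τ i) ω) ⁻¹' {a} = ⋂ i : Fin m, X (τ i) ⁻¹' {a i} := by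
    ext ω; simp [funext_iff, Set.mem_iInter]
  have hpre2 : (fun ω (i : Fin m) => X i ω) ⁻¹' {a} = ⋂ i : Fin m, X (i : ℕ) ⁻¹' {a i} := by
    ext ω; simp [funext_iff, Set.mem_iInter]
  have hid : Set.InjOn (fun j : ℕ => j) (Set.Iio m) := fun x _ y _ h => h
  rw [hpre1, hpre2, stmt3_aux_prod X hXindep m τ hτ a,
    stmt3_aux_prod X hXindep m (fun j => j) hid a]
  exact Finset.prod_congr rfl fun i _ =>
    ((hXident (τ i)).trans (hXident i).symm).measure_mem_eq (measurableSet_singleton _)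

/-- Integrability of bounded nonneg powers. -/
lemma stmt3_int_pow {F : Ω → ℝ} (hF : Measurable F) (h0 : ∀ ω, 0 ≤ F ω)
    {C : ℝ} (hC : ∀ ω, F ω ≤ C) (p : ℕ) : Integrable (fun ω => F ω ^ p) ℙ := by
  refine ⟨(hF.pow_const p).aestronglyMeasurable, ?_⟩
  apply HasFiniteIntegral.of_bounded (C := C ^ p)
  filter_upwards with ω
  rw [Real.norm_eq_abs, abs_of_nonneg (pow_nonneg (h0 ω) p)]
  exact pow_le_pow_left₀ (h0 ω) (hC ω) p

lemma stmt3_count_nonneg {ι : Type*} (t : Finset ι) (P : ι → Prop) [DecidablePred P] :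
    (0 : ℝ) ≤ ∑ k ∈ t, if P k then (1 : ℝ) else 0 :=
  Finset.sum_nonneg fun k _ => by positivity

lemma stmt3_count_le {ι : Type*} (t : Finset ι) (P : ι → Prop) [DecidablePred P] :
    ∑ k ∈ t, (if P k then (1 : ℝ) else 0) ≤ t.card := by
  calc ∑ k ∈ t, (if P k then (1 : ℝ) else 0) ≤ ∑ k ∈ t, 1 :=
        Finset.sum_le_sum fun k _ => by split <;> norm_num
    _ = t.card := by simp

lemma stmt3_sum_filter_eq (m k : ℕ) (hk : k ≤ m) (f : ℕ → ℤ) :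
    ∑ r ∈ Finset.univ.filter (fun r : Fin m => (r : ℕ) < k), f r
      = ∑ r ∈ Finset.range k, f r := by
  rw [Finset.sum_filter]
  rw [Fin.sum_univ_eq_sum_range (fun j => if j < k then f j else 0) m]
  rw [← Finset.sum_filter]
  congr 1
  ext r
  simp only [Finset.mem_filter, Finset.mem_range]
  omega

/-- Key comparison: the local time along an injectively reindexed increment sequence has
`p`-th moment bounded by that of `N n 0`. -/
lemma stmt3_aux_le (X : ℕ → Ω → ℤ) (hXmeas : ∀ k, Measurable (X k))
    (hXindep : iIndepFun X ℙ)
    (hXident : ∀ k, IdentDistrib (X k) (X 0) ℙ ℙ)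
    (S : ℕ → Ω → ℤ) (hS : ∀ n ω, S n ω = ∑ k ∈ Finset.range n, X k ω)
    (N : ℕ → ℤ → Ω → ℝ)
    (hN : ∀ n x ω, N n x ω = ∑ k ∈ Finset.range (n + 1), if S k ω = x then (1 : ℝ) else 0)
    (n m : ℕ) (hm : m ≤ n) (τ : ℕ → ℕ) (hτ : Set.InjOn τ (Set.Iio m)) (p : ℕ) :
    ∫ ω, (∑ k ∈ Finset.range (m + 1),
        if (∑ r ∈ Finset.range k, X (τ r) ω) = 0 then (1 : ℝ) else 0) ^ p
      ≤ ∫ ω, (N n 0 ω) ^ p := by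
  classical
  have hSmeas : ∀ k, Measurable (S k) := by
    intro k
    have : S k = fun ω => ∑ j ∈ Finset.range k, X j ω := funext (hS k)
    rw [this]
    exact Finset.measurable_sum _ fun j _ => hXmeas j
  set G : (Fin m → ℤ) → ℝ := fun y =>
    ∑ k ∈ Finset.range (m + 1),
      if (∑ r ∈ Finset.univ.filter (fun r : Fin m => (r : ℕ) < k), y r) = 0 then (1 : ℝ) else 0
    with hG
  have hGτ : ∀ ω, G (fun i : Fin m => X (τ i) ω)
      = ∑ k ∈ Finset.range (m + 1),
          if (∑ r ∈ Finset.range k, X (τ r) ω) = 0 then (1 : ℝ) else 0 := by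
    intro ω
    refine Finset.sum_congr rfl fun k hk => ?_
    have hk' : k ≤ m := by simpa [Nat.lt_succ_iff] using Finset.mem_range.mp hk
    rw [stmt3_sum_filter_eq m k hk' (fun r => X (τ r) ω)]
  have hGid : ∀ ω, G (fun i : Fin m => X (i : ℕ) ω) = N m 0 ω := by
    intro ω
    rw [hN m 0 ω]
    refine Finset.sum_congr rfl fun k hk => ?_
    have hk' : k ≤ m := by simpa [Nat.lt_succ_iff] using Finset.mem_range.mp hk
    rw [stmt3_sum_filter_eq m k hk' (fun r => X r ω), ← hS k ω]
  have hID := (stmt3_aux_tuple X hXmeas hXindep hXident m τ hτ).comp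
    (measurable_of_countable (fun y => (G y) ^ p))
  have heq1 : ∫ ω, (∑ k ∈ Finset.range (m + 1),
        if (∑ r ∈ Finset.range k, X (τ r) ω) = 0 then (1 : ℝ) else 0) ^ p
      = ∫ ω, (N m 0 ω) ^ p := by
    have := hID.integral_eq
    simp only [Function.comp] at this
    calc ∫ ω, (∑ k ∈ Finset.range (m + 1),
          if (∑ r ∈ Finset.range k, X (τ r) ω) = 0 then (1 : ℝ) else 0) ^ p
        = ∫ ω, (G (fun i : Fin m => X (τ i) ω)) ^ p := by
          congr 1; funext ω; rw [hGτ ω]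
      _ = ∫ ω, (G (fun i : Fin m => X (i : ℕ) ω)) ^ p := this
      _ = ∫ ω, (N m 0 ω) ^ p := by congr 1; funext ω; rw [hGid ω]
  rw [heq1]
  -- now N m 0 ≤ N n 0 pointwise
  have hNmeas : ∀ q : ℕ, Measurable (N q 0) := by
    intro q
    have : N q 0 = fun ω => ∑ k ∈ Finset.range (q + 1),
        if S k ω = 0 then (1 : ℝ) else 0 := funext (hN q 0)
    rw [this]
    refine Finset.measurable_sum _ fun k _ => ?_
    exact Measurable.ite (hSmeas k (measurableSet_singleton 0)) measurable_const measurable_const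
  have hN0 : ∀ q ω, 0 ≤ N q 0 ω := by
    intro q ω; rw [hN q 0 ω]; exact stmt3_count_nonneg _ _
  have hNle : ∀ q ω, N q 0 ω ≤ (q + 1 : ℝ) := by
    intro q ω; rw [hN q 0 ω]
    simpa using stmt3_count_le (Finset.range (q + 1)) (fun k => S k ω = 0)
  refine integral_mono (stmt3_int_pow (hNmeas m) (hN0 m) (hNle m) p)
    (stmt3_int_pow (hNmeas n) (hN0 n) (hNle n) p) ?_
  intro ω
  have hmono : N m 0 ω ≤ N n 0 ω := by
    rw [hN m 0 ω, hN n 0 ω]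
    apply Finset.sum_le_sum_of_subset_of_nonneg
    · exact Finset.range_subset_range.mpr (by omega)
    · intro k _ _; positivity
  exact pow_le_pow_left₀ (hN0 m ω) hmono p

end Aux

/-- Let `S` be a random walk with i.i.d. integer-valued increments,
`N n x` its local time at `x` up to time `n`, and `V n` its number of self-intersections
up to time `n`. Then for every integer `p ≥ 1` and every `n ≥ 1`,
`E(V_n ^ p) ≤ 2^p * (n+1)^p * E(N_n(0) ^ p)`. -/
theorem stmt3
    {Ω : Type*} [MeasureSpace Ω] [IsProbabilityMeasure (ℙ : Measure Ω)]
    (X : ℕ → Ω → ℤ) (hXmeas : ∀ k, Measurable (X k))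
    (hXindep : iIndepFun X ℙ)
    (hXident : ∀ k, IdentDistrib (X k) (X 0) ℙ ℙ)
    (S : ℕ → Ω → ℤ) (hS : ∀ n ω, S n ω = ∑ k ∈ Finset.range n, X k ω)
    (N : ℕ → ℤ → Ω → ℝ)
    (hN : ∀ n x ω, N n x ω = ∑ k ∈ Finset.range (n + 1), if S k ω = x then (1 : ℝ) else 0)
    (V : ℕ → Ω → ℝ)
    (hV : ∀ n ω, V n ω = ∑ i ∈ Finset.range (n + 1), ∑ j ∈ Finset.range (n + 1),
      if S i ω = S j ω then (1 : ℝ) else 0)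
    (p : ℕ) (hp : 1 ≤ p) (n : ℕ) (hn : 1 ≤ n) :
    ∫ ω, (V n ω) ^ p ≤ 2 ^ p * (n + 1 : ℝ) ^ p * ∫ ω, (N n 0 ω) ^ p := by
  classical
  have hSmeas : ∀ k, Measurable (S k) := by
    intro k
    have : S k = fun ω => ∑ j ∈ Finset.range k, X j ω := funext (hS k)
    rw [this]
    exact Finset.measurable_sum _ fun j _ => hXmeas j
  set A : ℕ → Ω → ℝ := fun i ω => ∑ k ∈ Finset.range (n - i + 1),
      if (∑ r ∈ Finset.range k, X (i + r) ω) = 0 then (1 : ℝ) else 0 with hA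
  set B : ℕ → Ω → ℝ := fun i ω => ∑ k ∈ Finset.range (i + 1),
      if (∑ r ∈ Finset.range k, X (i - 1 - r) ω) = 0 then (1 : ℝ) else 0 with hB
  -- pointwise inequality V n ω ≤ ∑ i, (A i ω + B i ω)
  have hsumA : ∀ i k ω, ∑ r ∈ Finset.range k, X (i + r) ω = S (i + k) ω - S i ω := by
    intro i k ω
    rw [hS (i + k) ω, hS i ω, Finset.sum_range_add]
    ring
  have hsumB : ∀ i k ω, k ≤ i →
      ∑ r ∈ Finset.range k, X (i - 1 - r) ω = S i ω - S (i - k) ω := by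
    intro i k ω hk
    have h1 : ∑ r ∈ Finset.range k, X (i - 1 - r) ω
        = ∑ r ∈ Finset.range k, X ((i - k) + r) ω := by
      rw [← Finset.sum_range_reflect (fun r => X ((i - k) + r) ω) k]
      refine Finset.sum_congr rfl fun r hr => ?_
      have hr' : r < k := Finset.mem_range.mp hr
      congr 1
      omega
    have h2 : S i ω = S (i - k) ω + ∑ r ∈ Finset.range k, X ((i - k) + r) ω := by
      have hik : i - k + k = i := by omega
      rw [hS i ω, hS (i - k) ω, ← Finset.sum_range_add, hik]
    rw [h1, h2]
    ring
  have hVle : ∀ ω, V n ω ≤ ∑ i ∈ Finset.range (n + 1), (A i ω + B i ω) := by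
    intro ω
    rw [hV n ω]
    refine Finset.sum_le_sum fun i hi => ?_
    have hi' : i ≤ n := by simpa [Nat.lt_succ_iff] using Finset.mem_range.mp hi
    -- split inner sum
    have hsplit : ∑ j ∈ Finset.range (n + 1), (if S i ω = S j ω then (1 : ℝ) else 0)
        = (∑ j ∈ Finset.range (i + 1), if S i ω = S j ω then (1 : ℝ) else 0)
          + ∑ j ∈ Finset.Ico (i + 1) (n + 1), if S i ω = S j ω then (1 : ℝ) else 0 := by
      rw [Finset.range_eq_Ico, ← Finset.sum_Ico_consecutive _ (by omega : 0 ≤ i + 1)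
        (by omega : i + 1 ≤ n + 1), ← Finset.range_eq_Ico]
    have hBpart : (∑ j ∈ Finset.range (i + 1), if S i ω = S j ω then (1 : ℝ) else 0)
        = B i ω := by
      rw [hB]
      simp only
      have h1 : ∑ k ∈ Finset.range (i + 1),
          (if (∑ r ∈ Finset.range k, X (i - 1 - r) ω) = 0 then (1 : ℝ) else 0)
          = ∑ k ∈ Finset.range (i + 1),
            (if S i ω - S (i - k) ω = 0 then (1 : ℝ) else 0) := by
        refine Finset.sum_congr rfl fun k hk => ?_
        rw [hsumB i k ω (by simpa [Nat.lt_succ_iff] using Finset.mem_range.mp hk)]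
      rw [h1]
      have h2 : ∑ k ∈ Finset.range (i + 1), (if S i ω - S (i - k) ω = 0 then (1 : ℝ) else 0)
          = ∑ k ∈ Finset.range (i + 1), (if S i ω - S k ω = 0 then (1 : ℝ) else 0) := by
        rw [← Finset.sum_range_reflect (fun k => if S i ω - S k ω = 0 then (1 : ℝ) else 0) (i + 1)]
        simp only [Nat.add_sub_cancel]
      rw [h2]
      refine (Finset.sum_congr rfl fun k _ => ?_).symm
      refine if_congr ?_ rfl rfl
      rw [sub_eq_zero]
    have hApart : (∑ j ∈ Finset.Ico (i + 1) (n + 1), if S i ω = S j ω then (1 : ℝ) else 0)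
        ≤ A i ω := by
      rw [hA]
      simp only
      have hAeq : ∑ k ∈ Finset.range (n - i + 1),
          (if (∑ r ∈ Finset.range k, X (i + r) ω) = 0 then (1 : ℝ) else 0)
          = ∑ k ∈ Finset.range (n - i + 1), (if S i ω = S (i + k) ω then (1 : ℝ) else 0) := by
        refine Finset.sum_congr rfl fun k _ => ?_
        rw [hsumA i k ω]
        refine if_congr ?_ rfl rfl
        rw [sub_eq_zero]
        exact eq_comm
      rw [hAeq, Finset.sum_range_succ' (fun k => if S i ω = S (i + k) ω then (1 : ℝ) else 0) (n - i)]
      have hIco : ∑ j ∈ Finset.Ico (i + 1) (n + 1), (if S i ω = S j ω then (1 : ℝ) else 0)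
          = ∑ k ∈ Finset.range (n - i), (if S i ω = S (i + (k + 1)) ω then (1 : ℝ) else 0) := by
        rw [Finset.sum_Ico_eq_sum_range]
        have : n + 1 - (i + 1) = n - i := by omega
        rw [this]
        refine Finset.sum_congr rfl fun k _ => ?_
        rw [show i + 1 + k = i + (k + 1) from by omega]
      rw [hIco]
      have : (0 : ℝ) ≤ if S i ω = S (i + 0) ω then (1 : ℝ) else 0 := by split <;> norm_num
      linarith
    rw [hsplit, hBpart]
    linarith [hApart]
  -- measurability and bounds for A, B, V
  have hAmeas : ∀ i, Measurable (A i) := by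
    intro i
    refine Finset.measurable_sum _ fun k _ => ?_
    have hm : Measurable fun ω => ∑ r ∈ Finset.range k, X (i + r) ω :=
      Finset.measurable_sum _ fun r _ => hXmeas _
    exact Measurable.ite (hm (measurableSet_singleton 0)) measurable_const measurable_const
  have hBmeas : ∀ i, Measurable (B i) := by
    intro i
    refine Finset.measurable_sum _ fun k _ => ?_
    have hm : Measurable fun ω => ∑ r ∈ Finset.range k, X (i - 1 - r) ω :=
      Finset.measurable_sum _ fun r _ => hXmeas _
    exact Measurable.ite (hm (measurableSet_singleton 0)) measurable_const measurable_const
  have hA0 : ∀ i ω, 0 ≤ A i ω := fun i ω => stmt3_count_nonneg _ _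
  have hB0 : ∀ i ω, 0 ≤ B i ω := fun i ω => stmt3_count_nonneg _ _
  have hAle : ∀ i ω, A i ω ≤ ((n - i + 1 : ℕ) : ℝ) := by
    intro i ω
    simp only [hA]
    refine le_trans (stmt3_count_le (Finset.range (n - i + 1)) _) ?_
    rw [Finset.card_range]
  have hBle : ∀ i ω, B i ω ≤ ((i + 1 : ℕ) : ℝ) := by
    intro i ω
    simp only [hB]
    refine le_trans (stmt3_count_le (Finset.range (i + 1)) _) ?_
    rw [Finset.card_range]
  have hVmeas : Measurable (V n) := by
    have : V n = fun ω => ∑ i ∈ Finset.range (n + 1), ∑ j ∈ Finset.range (n + 1),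
        if S i ω = S j ω then (1 : ℝ) else 0 := funext (hV n)
    rw [this]
    refine Finset.measurable_sum _ fun i _ => Finset.measurable_sum _ fun j _ => ?_
    have hm : Measurable fun ω => S i ω - S j ω := (hSmeas i).sub (hSmeas j)
    have hset : MeasurableSet {ω | S i ω = S j ω} := by
      have : {ω | S i ω = S j ω} = (fun ω => S i ω - S j ω) ⁻¹' {0} := by
        ext ω; simp [sub_eq_zero]
      rw [this]
      exact hm (measurableSet_singleton 0)
    exact Measurable.ite hset measurable_const measurable_const
  have hV0 : ∀ ω, 0 ≤ V n ω := by
    intro ω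
    rw [hV n ω]
    exact Finset.sum_nonneg fun i _ => stmt3_count_nonneg _ _
  have hVle' : ∀ ω, V n ω ≤ ((n + 1 : ℝ)) * (2 * (n + 1 : ℝ)) := by
    intro ω
    calc V n ω ≤ ∑ i ∈ Finset.range (n + 1), (A i ω + B i ω) := hVle ω
      _ ≤ ∑ i ∈ Finset.range (n + 1), (2 * (n + 1 : ℝ)) := by
          refine Finset.sum_le_sum fun i hi => ?_
          have hi' : i ≤ n := by simpa [Nat.lt_succ_iff] using Finset.mem_range.mp hi
          have h1 := hAle i ω
          have h2 := hBle i ω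
          have h3 : ((n - i + 1 : ℕ) : ℝ) ≤ (n + 1 : ℝ) := by
            have : ((n - i + 1 : ℕ) : ℝ) ≤ ((n + 1 : ℕ) : ℝ) := Nat.cast_le.mpr (by omega)
            simpa using this
          have h4 : ((i + 1 : ℕ) : ℝ) ≤ (n + 1 : ℝ) := by
            have : ((i + 1 : ℕ) : ℝ) ≤ ((n + 1 : ℕ) : ℝ) := Nat.cast_le.mpr (by omega)
            simpa using this
          linarith
      _ = ((n + 1 : ℝ)) * (2 * (n + 1 : ℝ)) := by simp [mul_comm]
  -- pointwise power bound
  have hpw : ∀ ω, V n ω ^ p ≤ (n + 1 : ℝ) ^ (p - 1) * 2 ^ (p - 1)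
      * ∑ i ∈ Finset.range (n + 1), (A i ω ^ p + B i ω ^ p) := by
    intro ω
    have step1 : V n ω ^ p ≤ (∑ i ∈ Finset.range (n + 1), (A i ω + B i ω)) ^ p :=
      pow_le_pow_left₀ (hV0 ω) (hVle ω) p
    have step2 : (∑ i ∈ Finset.range (n + 1), (A i ω + B i ω)) ^ p
        ≤ (n + 1 : ℝ) ^ (p - 1) * ∑ i ∈ Finset.range (n + 1), (A i ω + B i ω) ^ p := by
      have h := pow_sum_div_card_le_sum_pow
        (f := fun i => A i ω + B i ω) (s := Finset.range (n + 1))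
        (fun i _ => by
          show (0 : ℝ) ≤ A i ω + B i ω
          have h1 := hA0 i ω; have h2 := hB0 i ω; linarith) (p - 1)
      have hp' : p - 1 + 1 = p := by omega
      rw [hp'] at h
      have hcard : ((Finset.range (n + 1)).card : ℝ) = (n + 1 : ℝ) := by
        rw [Finset.card_range]; push_cast; ring
      rw [hcard] at h
      have hpos : (0 : ℝ) < (n + 1 : ℝ) ^ (p - 1) := by positivity
      calc (∑ i ∈ Finset.range (n + 1), (A i ω + B i ω)) ^ p
          = ((∑ i ∈ Finset.range (n + 1), (A i ω + B i ω)) ^ p / (n + 1 : ℝ) ^ (p - 1))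
            * (n + 1 : ℝ) ^ (p - 1) := by field_simp
        _ ≤ (∑ i ∈ Finset.range (n + 1), (A i ω + B i ω) ^ p) * (n + 1 : ℝ) ^ (p - 1) :=
            mul_le_mul_of_nonneg_right h (le_of_lt hpos)
        _ = (n + 1 : ℝ) ^ (p - 1) * ∑ i ∈ Finset.range (n + 1), (A i ω + B i ω) ^ p := by ring
    have step3 : ∑ i ∈ Finset.range (n + 1), (A i ω + B i ω) ^ p
        ≤ 2 ^ (p - 1) * ∑ i ∈ Finset.range (n + 1), (A i ω ^ p + B i ω ^ p) := by
      rw [Finset.mul_sum]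
      exact Finset.sum_le_sum fun i _ => add_pow_le (hA0 i ω) (hB0 i ω) p
    calc V n ω ^ p ≤ (n + 1 : ℝ) ^ (p - 1) * ∑ i ∈ Finset.range (n + 1), (A i ω + B i ω) ^ p :=
          le_trans step1 step2
      _ ≤ (n + 1 : ℝ) ^ (p - 1) * (2 ^ (p - 1)
          * ∑ i ∈ Finset.range (n + 1), (A i ω ^ p + B i ω ^ p)) := by
          refine mul_le_mul_of_nonneg_left step3 (by positivity)
      _ = (n + 1 : ℝ) ^ (p - 1) * 2 ^ (p - 1)
          * ∑ i ∈ Finset.range (n + 1), (A i ω ^ p + B i ω ^ p) := by ring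
  -- integrate
  have hintAB : ∀ i, Integrable (fun ω => A i ω ^ p + B i ω ^ p) ℙ := fun i =>
    (stmt3_int_pow (hAmeas i) (hA0 i) (hAle i) p).add
      (stmt3_int_pow (hBmeas i) (hB0 i) (hBle i) p)
  have hintsum : Integrable (fun ω => (n + 1 : ℝ) ^ (p - 1) * 2 ^ (p - 1)
      * ∑ i ∈ Finset.range (n + 1), (A i ω ^ p + B i ω ^ p)) ℙ :=
    (integrable_finset_sum _ fun i _ => hintAB i).const_mul _
  have hint1 : ∫ ω, V n ω ^ p ≤ ∫ ω, (n + 1 : ℝ) ^ (p - 1) * 2 ^ (p - 1)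
      * ∑ i ∈ Finset.range (n + 1), (A i ω ^ p + B i ω ^ p) := by
    refine integral_mono (stmt3_int_pow hVmeas hV0 hVle' p) hintsum hpw
  have hIN : (0 : ℝ) ≤ ∫ ω, (N n 0 ω) ^ p :=
    integral_nonneg fun ω => by
      have : 0 ≤ N n 0 ω := by rw [hN n 0 ω]; exact stmt3_count_nonneg _ _
      positivity
  have hbound : ∀ i ∈ Finset.range (n + 1),
      (∫ ω, (A i ω ^ p + B i ω ^ p)) ≤ 2 * ∫ ω, (N n 0 ω) ^ p := by
    intro i hi
    have hi' : i ≤ n := by simpa [Nat.lt_succ_iff] using Finset.mem_range.mp hi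
    have hτA : Set.InjOn (fun r : ℕ => i + r) (Set.Iio (n - i)) := by
      intro x _ y _ h
      have h' : i + x = i + y := h
      omega
    have hτB : Set.InjOn (fun r : ℕ => i - 1 - r) (Set.Iio i) := by
      intro x hx y hy h
      simp only [Set.mem_Iio] at hx hy
      have h' : i - 1 - x = i - 1 - y := h
      omega
    have hAint := stmt3_aux_le X hXmeas hXindep hXident S hS N hN n (n - i) (by omega)
      (fun r => i + r) hτA p
    have hBint := stmt3_aux_le X hXmeas hXindep hXident S hS N hN n i hi'
      (fun r => i - 1 - r) hτB p
    rw [integral_add (stmt3_int_pow (hAmeas i) (hA0 i) (hAle i) p)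
      (stmt3_int_pow (hBmeas i) (hB0 i) (hBle i) p)]
    have hAi : ∫ ω, A i ω ^ p ≤ ∫ ω, (N n 0 ω) ^ p := hAint
    have hBi : ∫ ω, B i ω ^ p ≤ ∫ ω, (N n 0 ω) ^ p := hBint
    linarith
  have hint2 : ∫ ω, (n + 1 : ℝ) ^ (p - 1) * 2 ^ (p - 1)
      * ∑ i ∈ Finset.range (n + 1), (A i ω ^ p + B i ω ^ p)
      = (n + 1 : ℝ) ^ (p - 1) * 2 ^ (p - 1)
        * ∑ i ∈ Finset.range (n + 1), ∫ ω, (A i ω ^ p + B i ω ^ p) := by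
    rw [MeasureTheory.integral_const_mul, integral_finset_sum _ fun i _ => hintAB i]
  have hfin : (n + 1 : ℝ) ^ (p - 1) * 2 ^ (p - 1)
      * ∑ i ∈ Finset.range (n + 1), ∫ ω, (A i ω ^ p + B i ω ^ p)
      ≤ 2 ^ p * (n + 1 : ℝ) ^ p * ∫ ω, (N n 0 ω) ^ p := by
    have h1 : ∑ i ∈ Finset.range (n + 1), ∫ ω, (A i ω ^ p + B i ω ^ p)
        ≤ (n + 1 : ℝ) * (2 * ∫ ω, (N n 0 ω) ^ p) := by
      calc ∑ i ∈ Finset.range (n + 1), ∫ ω, (A i ω ^ p + B i ω ^ p)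
          ≤ ∑ i ∈ Finset.range (n + 1), (2 * ∫ ω, (N n 0 ω) ^ p) :=
            Finset.sum_le_sum hbound
        _ = (n + 1 : ℝ) * (2 * ∫ ω, (N n 0 ω) ^ p) := by
            rw [Finset.sum_const, Finset.card_range]; push_cast; ring
    have hcpos : (0 : ℝ) ≤ (n + 1 : ℝ) ^ (p - 1) * 2 ^ (p - 1) := by positivity
    calc (n + 1 : ℝ) ^ (p - 1) * 2 ^ (p - 1)
        * ∑ i ∈ Finset.range (n + 1), ∫ ω, (A i ω ^ p + B i ω ^ p)
        ≤ (n + 1 : ℝ) ^ (p - 1) * 2 ^ (p - 1)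
          * ((n + 1 : ℝ) * (2 * ∫ ω, (N n 0 ω) ^ p)) := by
          refine mul_le_mul_of_nonneg_left h1 hcpos
      _ = ((n + 1 : ℝ) ^ (p - 1) * (n + 1 : ℝ)) * ((2 : ℝ) ^ (p - 1) * 2)
          * ∫ ω, (N n 0 ω) ^ p := by ring
      _ = 2 ^ p * (n + 1 : ℝ) ^ p * ∫ ω, (N n 0 ω) ^ p := by
          have h2 : (2 : ℝ) ^ (p - 1) * 2 = 2 ^ p := by
            rw [← pow_succ]; congr 1; omega
          have h3 : (n + 1 : ℝ) ^ (p - 1) * (n + 1 : ℝ) = (n + 1 : ℝ) ^ p := by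
            rw [← pow_succ]; congr 1; omega
          rw [h2, h3]; ring
  calc ∫ ω, V n ω ^ p ≤ _ := hint1
    _ = _ := hint2
    _ ≤ _ := hfin
end

section
/- For all integers 0 ≤ k ≤ m, E[ Σ_{x∈ℤ} (N_m(x) − N_k(x))² ] ≤ E[ V_{m−k} ]. -/
open MeasureTheory ProbabilityTheory Filter Topology

private lemma sum_shift_identDistrib
    {Ω : Type*} [MeasureSpace Ω] [IsProbabilityMeasure (ℙ : Measure Ω)]
    (X : ℕ → Ω → ℤ) (hXmeas : ∀ k, Measurable (X k))
    (hXindep : iIndepFun X ℙ)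
    (hXident : ∀ k, IdentDistrib (X k) (X 0) ℙ ℙ) :
    ∀ (n p q : ℕ), IdentDistrib (fun ω => ∑ l ∈ Finset.range n, X (p + l) ω)
      (fun ω => ∑ l ∈ Finset.range n, X (q + l) ω) ℙ ℙ := by
  intro n
  induction n with
  | zero => simp only [Finset.range_zero, Finset.sum_empty]
            exact fun p q => IdentDistrib.refl aemeasurable_const
  | succ n ih =>
    intro p q
    have hsum_meas : ∀ r : ℕ, Measurable (fun ω => ∑ l ∈ Finset.range n, X (r + l) ω) :=
      fun r => Finset.measurable_sum _ (fun l _ => hXmeas _)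
    have hindep : ∀ r : ℕ, IndepFun (fun ω => ∑ l ∈ Finset.range n, X (r + l) ω) (X (r + n)) ℙ := by
      intro r
      have hrw : (fun ω => ∑ l ∈ Finset.range n, X (r + l) ω)
          = ∑ j ∈ (Finset.range n).image (fun l => r + l), X j := by
        funext ω
        rw [Finset.sum_apply, Finset.sum_image (fun a _ b _ h => Nat.add_left_cancel h)]
      have hnotmem : r + n ∉ (Finset.range n).image (fun l => r + l) := by
        simp only [Finset.mem_image, Finset.mem_range]
        rintro ⟨a, ha, h⟩; omega
      rw [hrw]
      exact hXindep.indepFun_finsetSum_of_notMem hXmeas hnotmem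
    have hXid : IdentDistrib (X (p + n)) (X (q + n)) ℙ ℙ :=
      (hXident (p + n)).trans (hXident (q + n)).symm
    have hpair : IdentDistrib
        (fun ω => ((∑ l ∈ Finset.range n, X (p + l) ω), X (p + n) ω))
        (fun ω => ((∑ l ∈ Finset.range n, X (q + l) ω), X (q + n) ω)) ℙ ℙ := by
      refine ⟨((hsum_meas p).aemeasurable).prodMk (hXmeas _).aemeasurable,
        ((hsum_meas q).aemeasurable).prodMk (hXmeas _).aemeasurable, ?_⟩
      rw [(indepFun_iff_map_prod_eq_prod_map_map (hsum_meas p).aemeasurable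
          (hXmeas _).aemeasurable).mp (hindep p),
        (indepFun_iff_map_prod_eq_prod_map_map (hsum_meas q).aemeasurable
          (hXmeas _).aemeasurable).mp (hindep q),
        (ih p q).map_eq, hXid.map_eq]
    have := hpair.comp (measurable_fst.add measurable_snd : Measurable (fun z : ℤ × ℤ => z.1 + z.2))
    simp only [Finset.sum_range_succ]
    exact this

/-- Let `S` be a random walk with i.i.d. integer-valued increments,
`N n x` its local time at `x` up to time `n`, and `V n` its number of self-intersections
up to time `n`. Then for all integers `0 ≤ k ≤ m`,
`E[Σ_{x∈ℤ} (N m x − N k x)²] ≤ E[V (m−k)]`. -/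
theorem stmt17
    {Ω : Type*} [MeasureSpace Ω] [IsProbabilityMeasure (ℙ : Measure Ω)]
    (X : ℕ → Ω → ℤ) (hXmeas : ∀ k, Measurable (X k))
    (hXindep : iIndepFun X ℙ)
    (hXident : ∀ k, IdentDistrib (X k) (X 0) ℙ ℙ)
    (S : ℕ → Ω → ℤ) (hS : ∀ n ω, S n ω = ∑ j ∈ Finset.range n, X j ω)
    (N : ℕ → ℤ → Ω → ℝ)
    (hN : ∀ n x ω, N n x ω = ∑ j ∈ Finset.range (n + 1), if S j ω = x then (1 : ℝ) else 0)
    (V : ℕ → Ω → ℝ)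
    (hV : ∀ n ω, V n ω = ∑ i ∈ Finset.range (n + 1), ∑ j ∈ Finset.range (n + 1),
      if S i ω = S j ω then (1 : ℝ) else 0)
    (k m : ℕ) (hkm : k ≤ m) :
    ∫ ω, (∑' x : ℤ, (N m x ω - N k x ω) ^ 2) ≤ ∫ ω, V (m - k) ω := by
  classical
  -- measurability of S
  have hSmeas : ∀ n, Measurable (S n) := by
    intro n
    have : S n = fun ω => ∑ j ∈ Finset.range n, X j ω := funext (hS n)
    rw [this]
    exact Finset.measurable_sum _ (fun j _ => hXmeas j)
  -- integrability of the indicators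
  have hint : ∀ i j : ℕ, Integrable (fun ω => if S i ω = S j ω then (1 : ℝ) else 0) ℙ := by
    intro i j
    have hA : MeasurableSet {ω | S i ω = S j ω} := by
      have : {ω | S i ω = S j ω} = (fun ω => S i ω - S j ω) ⁻¹' {0} := by
        ext ω; simp [sub_eq_zero]
      rw [this]
      exact ((hSmeas i).sub (hSmeas j)) (measurableSet_singleton 0)
    have : (fun ω => if S i ω = S j ω then (1 : ℝ) else 0)
        = Set.indicator {ω | S i ω = S j ω} (fun _ => (1 : ℝ)) := by
      funext ω; simp [Set.indicator_apply, Set.mem_setOf_eq]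
    rw [this]
    exact (integrable_const (1 : ℝ)).indicator hA
  -- nonnegativity of each integral
  have hnn : ∀ i j : ℕ, 0 ≤ ∫ ω, (if S i ω = S j ω then (1 : ℝ) else 0) :=
    fun i j => integral_nonneg (fun ω => by positivity)
  -- pointwise identity for the tsum
  have hpt : ∀ ω, (∑' x : ℤ, (N m x ω - N k x ω) ^ 2)
      = ∑ i ∈ Finset.Ico (k + 1) (m + 1), ∑ j ∈ Finset.Ico (k + 1) (m + 1),
          (if S i ω = S j ω then (1 : ℝ) else 0) := by
    intro ω
    have hdiff : ∀ x : ℤ, N m x ω - N k x ω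
        = ∑ j ∈ Finset.Ico (k + 1) (m + 1), (if S j ω = x then (1 : ℝ) else 0) := by
      intro x
      rw [hN, hN, eq_comm]
      rw [Finset.sum_Ico_eq_sub _ (by omega : k + 1 ≤ m + 1)]
    have hsummand : ∀ i j : ℕ, Summable (fun x : ℤ =>
        (if S i ω = x then (1 : ℝ) else 0) * (if S j ω = x then (1 : ℝ) else 0)) := by
      intro i j
      apply summable_of_ne_finset_zero (s := {S i ω})
      intro x hx
      simp only [Finset.mem_singleton] at hx
      rw [if_neg (fun h => hx h.symm), zero_mul]
    have htsum : ∀ i j : ℕ, (∑' x : ℤ,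
        (if S i ω = x then (1 : ℝ) else 0) * (if S j ω = x then (1 : ℝ) else 0))
        = (if S i ω = S j ω then (1 : ℝ) else 0) := by
      intro i j
      by_cases h : S i ω = S j ω
      · rw [if_pos h, tsum_eq_single (S i ω) (fun x hx => by
          rw [if_neg (fun h' => hx h'.symm), zero_mul])]
        rw [if_pos rfl, if_pos h.symm, one_mul]
      · rw [if_neg h]
        have hz : (fun x : ℤ =>
            (if S i ω = x then (1 : ℝ) else 0) * (if S j ω = x then (1 : ℝ) else 0))
            = fun _ => (0 : ℝ) := by
          funext x
          by_cases hx : S i ω = x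
          · have hjx : ¬ S j ω = x := fun h' => h (hx.trans h'.symm)
            rw [if_neg hjx, mul_zero]
          · rw [if_neg hx, zero_mul]
        rw [hz, tsum_zero]
    calc (∑' x : ℤ, (N m x ω - N k x ω) ^ 2)
        = ∑' x : ℤ, ∑ i ∈ Finset.Ico (k + 1) (m + 1), ∑ j ∈ Finset.Ico (k + 1) (m + 1),
            (if S i ω = x then (1 : ℝ) else 0) * (if S j ω = x then (1 : ℝ) else 0) := by
          congr 1; funext x
          rw [hdiff, sq, Finset.sum_mul_sum]
      _ = ∑ i ∈ Finset.Ico (k + 1) (m + 1), ∑ j ∈ Finset.Ico (k + 1) (m + 1),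
            ∑' x : ℤ, (if S i ω = x then (1 : ℝ) else 0) * (if S j ω = x then (1 : ℝ) else 0) := by
          rw [Summable.tsum_finsetSum (fun i _ => summable_sum (fun j _ => hsummand i j))]
          exact Finset.sum_congr rfl (fun i _ => Summable.tsum_finsetSum (fun j _ => hsummand i j))
      _ = ∑ i ∈ Finset.Ico (k + 1) (m + 1), ∑ j ∈ Finset.Ico (k + 1) (m + 1),
            (if S i ω = S j ω then (1 : ℝ) else 0) :=
          Finset.sum_congr rfl (fun i _ => Finset.sum_congr rfl (fun j _ => htsum i j))
  -- difference of S as sum of increments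
  have hsub : ∀ u v : ℕ, u ≤ v → (fun ω => S v ω - S u ω)
      = fun ω => ∑ l ∈ Finset.range (v - u), X (u + l) ω := by
    intro u v huv
    funext ω
    rw [hS, hS, ← Finset.sum_Ico_eq_sub _ huv, Finset.sum_Ico_eq_sum_range]
  -- key stationarity identity
  have hkey : ∀ a b : ℕ, (∫ ω, (if S (k + 1 + a) ω = S (k + 1 + b) ω then (1 : ℝ) else 0))
      = ∫ ω, (if S a ω = S b ω then (1 : ℝ) else 0) := by
    have hmain : ∀ a b : ℕ, a ≤ b →
        (∫ ω, (if S (k + 1 + a) ω = S (k + 1 + b) ω then (1 : ℝ) else 0))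
        = ∫ ω, (if S a ω = S b ω then (1 : ℝ) else 0) := by
      intro a b hab
      have h1 : (fun ω => S (k + 1 + b) ω - S (k + 1 + a) ω)
          = fun ω => ∑ l ∈ Finset.range (b - a), X ((k + 1 + a) + l) ω := by
        rw [hsub _ _ (by omega)]
        have : (k + 1 + b) - (k + 1 + a) = b - a := by omega
        rw [this]
      have h2 : (fun ω => S b ω - S a ω)
          = fun ω => ∑ l ∈ Finset.range (b - a), X (a + l) ω := hsub a b hab
      have hid : IdentDistrib (fun ω => S (k + 1 + b) ω - S (k + 1 + a) ω)
          (fun ω => S b ω - S a ω) ℙ ℙ := by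
        rw [h1, h2]
        exact sum_shift_identDistrib X hXmeas hXindep hXident (b - a) (k + 1 + a) a
      have hg : Measurable (fun z : ℤ => if z = 0 then (1 : ℝ) else 0) := by
        exact measurable_from_top
      have := (hid.comp hg).integral_eq
      have hrw : ∀ i j : ℕ, ((fun z : ℤ => if z = 0 then (1 : ℝ) else 0)
          ∘ fun ω => S j ω - S i ω) = fun ω => if S i ω = S j ω then (1 : ℝ) else 0 := by
        intro i j
        funext ω
        simp only [Function.comp_apply, sub_eq_zero]
        exact if_congr ⟨fun h => h.symm, fun h => h.symm⟩ rfl rfl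
      rw [hrw, hrw] at this
      exact this
    intro a b
    rcases le_or_gt a b with hab | hba
    · exact hmain a b hab
    · have hsymm : ∀ i j : ℕ, (fun ω => if S i ω = S j ω then (1 : ℝ) else 0)
          = fun ω => if S j ω = S i ω then (1 : ℝ) else 0 := by
        intro i j; funext ω
        exact if_congr ⟨fun h => h.symm, fun h => h.symm⟩ rfl rfl
      calc (∫ ω, (if S (k + 1 + a) ω = S (k + 1 + b) ω then (1 : ℝ) else 0))
          = ∫ ω, (if S (k + 1 + b) ω = S (k + 1 + a) ω then (1 : ℝ) else 0) := by rw [hsymm]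
        _ = ∫ ω, (if S b ω = S a ω then (1 : ℝ) else 0) := hmain b a hba.le
        _ = ∫ ω, (if S a ω = S b ω then (1 : ℝ) else 0) := by rw [hsymm]
  -- rewrite both sides and conclude
  calc (∫ ω, (∑' x : ℤ, (N m x ω - N k x ω) ^ 2))
      = ∫ ω, ∑ i ∈ Finset.Ico (k + 1) (m + 1), ∑ j ∈ Finset.Ico (k + 1) (m + 1),
          (if S i ω = S j ω then (1 : ℝ) else 0) := by
        exact integral_congr_ae (Eventually.of_forall hpt)
    _ = ∑ i ∈ Finset.Ico (k + 1) (m + 1), ∑ j ∈ Finset.Ico (k + 1) (m + 1),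
          ∫ ω, (if S i ω = S j ω then (1 : ℝ) else 0) := by
        rw [integral_finset_sum _ (fun i _ => integrable_finset_sum _ (fun j _ => hint i j))]
        exact Finset.sum_congr rfl (fun i _ => integral_finset_sum _ (fun j _ => hint i j))
    _ = ∑ a ∈ Finset.range (m - k), ∑ b ∈ Finset.range (m - k),
          ∫ ω, (if S (k + 1 + a) ω = S (k + 1 + b) ω then (1 : ℝ) else 0) := by
        rw [Finset.sum_Ico_eq_sum_range]
        have hmk : (m + 1) - (k + 1) = m - k := by omega
        rw [hmk]
        exact Finset.sum_congr rfl (fun a _ => by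
          rw [Finset.sum_Ico_eq_sum_range, hmk])
    _ = ∑ a ∈ Finset.range (m - k), ∑ b ∈ Finset.range (m - k),
          ∫ ω, (if S a ω = S b ω then (1 : ℝ) else 0) :=
        Finset.sum_congr rfl (fun a _ => Finset.sum_congr rfl (fun b _ => hkey a b))
    _ ≤ ∑ a ∈ Finset.range (m - k + 1), ∑ b ∈ Finset.range (m - k + 1),
          ∫ ω, (if S a ω = S b ω then (1 : ℝ) else 0) := by
        have hstep : ∀ a : ℕ, (∑ b ∈ Finset.range (m - k),
            ∫ ω, (if S a ω = S b ω then (1 : ℝ) else 0))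
            ≤ ∑ b ∈ Finset.range (m - k + 1), ∫ ω, (if S a ω = S b ω then (1 : ℝ) else 0) :=
          fun a => Finset.sum_le_sum_of_subset_of_nonneg
            (Finset.range_subset_range.mpr (by omega)) (fun b _ _ => hnn a b)
        calc (∑ a ∈ Finset.range (m - k), ∑ b ∈ Finset.range (m - k),
              ∫ ω, (if S a ω = S b ω then (1 : ℝ) else 0))
            ≤ ∑ a ∈ Finset.range (m - k), ∑ b ∈ Finset.range (m - k + 1),
              ∫ ω, (if S a ω = S b ω then (1 : ℝ) else 0) :=
              Finset.sum_le_sum (fun a _ => hstep a)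
          _ ≤ ∑ a ∈ Finset.range (m - k + 1), ∑ b ∈ Finset.range (m - k + 1),
              ∫ ω, (if S a ω = S b ω then (1 : ℝ) else 0) :=
              Finset.sum_le_sum_of_subset_of_nonneg
                (Finset.range_subset_range.mpr (by omega))
                (fun a _ _ => Finset.sum_nonneg (fun b _ => hnn a b))
    _ = ∫ ω, V (m - k) ω := by
        rw [eq_comm]
        calc (∫ ω, V (m - k) ω)
            = ∫ ω, ∑ i ∈ Finset.range (m - k + 1), ∑ j ∈ Finset.range (m - k + 1),
                (if S i ω = S j ω then (1 : ℝ) else 0) :=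
              integral_congr_ae (Eventually.of_forall (fun ω => hV (m - k) ω))
          _ = ∑ i ∈ Finset.range (m - k + 1), ∑ j ∈ Finset.range (m - k + 1),
                ∫ ω, (if S i ω = S j ω then (1 : ℝ) else 0) := by
              rw [integral_finset_sum _ (fun i _ => integrable_finset_sum _ (fun j _ => hint i j))]
              exact Finset.sum_congr rfl (fun i _ => integral_finset_sum _ (fun j _ => hint i j))
end
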